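/- Let P(x) = a₀ + a₁x + ⋯ + a_m x^m be a complex polynomial of degree at most m satisfying |P(x)| ≤ A for all x in the real interval [0, B], where A, B > 0. Then for every j = 0, …, m one has |a_j| ≤ (2m)^{m+1} · A · B^{-j}. -/

import Mathlib

set_option maxHeartbeats 1000000

open Polynomial Finset

lemma prodBound {ι : Type*} [DecidableEq ι] (B : ℝ) (hB : 0 ≤ B) (s : Finset ι) (c : ι → ℂ)
    (hc : ∀ i ∈ s, ‖c i‖ ≤ B) :
    ∀ k, ‖(∏ i ∈ s, (X - C (c i))).coeff k‖ * B ^ k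
      ≤ 2 ^ s.card * B ^ s.card := by
  induction s using Finset.induction_on with
  | empty =>
    intro k
    rcases k with _ | k
    · simp
    · simp [Polynomial.coeff_one]
  | @insert a s ha ih =>
    intro k
    have hQ := ih (fun i hi => hc i (Finset.mem_insert_of_mem hi))
    have hca : ‖c a‖ ≤ B := hc a (Finset.mem_insert_self a s)
    set Q := ∏ i ∈ s, (X - C (c i)) with hQdef
    set n := s.card with hn
    rw [Finset.prod_insert ha, Finset.card_insert_of_notMem ha]
    have h2n : (0:ℝ) ≤ 2 ^ n * B ^ n := by positivity
    rcases k with _ | k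
    · have h0 : ((X - C (c a)) * Q).coeff 0 = - (c a * Q.coeff 0) := by
        simp [sub_mul, Polynomial.mul_coeff_zero]
      rw [h0]
      have hQ0 := hQ 0
      rw [pow_zero, mul_one] at hQ0
      rw [pow_zero, mul_one, norm_neg, norm_mul]
      calc ‖c a‖ * ‖Q.coeff 0‖ ≤ B * (2 ^ n * B ^ n) := by
            apply mul_le_mul hca hQ0 (by positivity) hB
        _ ≤ 2 ^ (n+1) * B ^ (n+1) := by rw [pow_succ, pow_succ]; nlinarith
    · have h0 : ((X - C (c a)) * Q).coeff (k+1) = Q.coeff k - c a * Q.coeff (k+1) := by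
        rw [sub_mul, coeff_sub, coeff_X_mul, coeff_C_mul]
      rw [h0]
      have tri : ‖Q.coeff k - c a * Q.coeff (k+1)‖
          ≤ ‖Q.coeff k‖ + ‖c a‖ * ‖Q.coeff (k+1)‖ := by
        calc ‖Q.coeff k - c a * Q.coeff (k+1)‖
            ≤ ‖Q.coeff k‖ + ‖c a * Q.coeff (k+1)‖ := by
              simpa [sub_eq_add_neg] using norm_add_le (Q.coeff k) (-(c a * Q.coeff (k+1)))
          _ = _ := by rw [norm_mul]
      calc ‖Q.coeff k - c a * Q.coeff (k+1)‖ * B ^ (k+1)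
          ≤ (‖Q.coeff k‖ + B * ‖Q.coeff (k+1)‖) * B ^ (k+1) := by
            apply mul_le_mul_of_nonneg_right _ (by positivity)
            refine tri.trans ?_
            gcongr
        _ = B * (‖Q.coeff k‖ * B ^ k) + B * (‖Q.coeff (k+1)‖ * B ^ (k+1)) := by
            ring
        _ ≤ B * (2 ^ n * B ^ n) + B * (2 ^ n * B ^ n) := by have h1 := hQ k; have h2 := hQ (k+1); gcongr
        _ = 2 ^ (n+1) * B ^ (n+1) := by ring

theorem stmt1 (m : ℕ) (hm : 1 ≤ m) (P : Polynomial ℂ) (hdeg : P.natDegree ≤ m)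
    (A B : ℝ) (hA : 0 < A) (hB : 0 < B)
    (hP : ∀ x ∈ Set.Icc (0 : ℝ) B, ‖P.eval (x : ℂ)‖ ≤ A) :
    ∀ j ≤ m, ‖P.coeff j‖ ≤ (2 * (m : ℝ)) ^ (m + 1) * A * B ^ (-(j : ℤ)) := by
  intro j hj
  have hm0 : (0:ℝ) < m := by exact_mod_cast hm
  set s : Finset ℕ := Finset.range (m+1) with hs
  set v : ℕ → ℂ := fun i => ((i * B / m : ℝ) : ℂ) with hv
  -- injectivity
  have hinj : Set.InjOn v s := by
    intro i _ k _ h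
    have h' : (i : ℝ) * B / m = (k : ℝ) * B / m := Complex.ofReal_inj.mp h
    have h2 : (i : ℝ) * (B / m) = (k : ℝ) * (B / m) := by
      rw [← mul_div_assoc, ← mul_div_assoc]; exact h'
    have hBm : (B / (m:ℝ)) ≠ 0 := by positivity
    have : (i : ℝ) = k := mul_right_cancel₀ hBm h2
    exact_mod_cast this
  have hdeg' : P.degree < (s.card : ℕ) := by
    rw [hs, Finset.card_range]
    calc P.degree ≤ (P.natDegree : WithBot ℕ) := Polynomial.degree_le_natDegree
      _ < ((m+1 : ℕ) : WithBot ℕ) := by exact_mod_cast Nat.lt_succ_of_le hdeg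
  have hPint := Lagrange.eq_interpolate (f := P) hinj hdeg'
  -- distance lower bound
  have hdist : ∀ i ∈ s, ∀ k ∈ s, i ≠ k → B / m ≤ ‖v i - v k‖ := by
    intro i _ k _ hik
    have h1 : (1:ℤ) ≤ |(i:ℤ) - (k:ℤ)| := Int.one_le_abs (sub_ne_zero.mpr (by exact_mod_cast hik))
    have h1' : (1:ℝ) ≤ |(i:ℝ) - (k:ℝ)| := by exact_mod_cast h1
    have : v i - v k = (((i:ℝ) * B / m - (k:ℝ) * B / m : ℝ) : ℂ) := by push_cast [hv]; ring
    rw [this, Complex.norm_real, Real.norm_eq_abs]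
    have : (i:ℝ) * B / m - (k:ℝ) * B / m = ((i:ℝ) - k) * (B / m) := by ring
    rw [this, abs_mul, abs_of_pos (by positivity : (0:ℝ) < B / m)]
    exact le_mul_of_one_le_left (by positivity) h1'
  -- key per-node bound
  have key : ∀ i ∈ s, ‖(Polynomial.C (P.eval (v i)) * Lagrange.basis s v i).coeff j‖
      * B ^ j ≤ A * (2 * m) ^ m := by
    intro i hi
    have him : i ≤ m := by simpa [hs, Nat.lt_succ_iff] using hi
    have hcard : (s.erase i).card = m := by rw [Finset.card_erase_of_mem hi, hs, Finset.card_range]; omega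
    -- eval bound
    have heval : ‖P.eval (v i)‖ ≤ A := by
      apply hP
      constructor
      · positivity
      · rw [div_le_iff₀ hm0]
        have : (i:ℝ) ≤ m := by exact_mod_cast him
        nlinarith
    -- basis decomposition
    have hbasis : Lagrange.basis s v i
        = Polynomial.C (∏ k ∈ s.erase i, (v i - v k)⁻¹) * ∏ k ∈ s.erase i, (X - C (v k)) := by
      rw [Lagrange.basis]
      simp_rw [Lagrange.basisDivisor]
      rw [Finset.prod_mul_distrib, map_prod]
    -- denominator bound
    have hden : ‖∏ k ∈ s.erase i, (v i - v k)⁻¹‖ ≤ ((m:ℝ) / B) ^ m := by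
      rw [norm_prod]
      calc ∏ k ∈ s.erase i, ‖(v i - v k)⁻¹‖
          ≤ ∏ _k ∈ s.erase i, ((m:ℝ) / B) := by
            apply Finset.prod_le_prod (fun _ _ => norm_nonneg _)
            intro k hk
            obtain ⟨hki, hks⟩ := Finset.mem_erase.mp hk
            have hd := hdist i hi k hks (Ne.symm hki)
            rw [norm_inv]
            calc (‖v i - v k‖)⁻¹ ≤ (B / m)⁻¹ :=
                  inv_anti₀ (by positivity) hd
              _ = (m:ℝ) / B := by rw [inv_div]
        _ = ((m:ℝ) / B) ^ m := by rw [Finset.prod_const, hcard]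
    -- numerator bound
    have hnum : ‖(∏ k ∈ s.erase i, (X - C (v k))).coeff j‖ * B ^ j
        ≤ 2 ^ m * B ^ m := by
      have habs : ∀ k ∈ s.erase i, ‖v k‖ ≤ B := by
        intro k hk
        have hkm : k ≤ m := by
          have := (Finset.mem_erase.mp hk).2
          simpa [hs, Nat.lt_succ_iff] using this
        rw [hv, Complex.norm_real, Real.norm_eq_abs, abs_of_nonneg (by positivity)]
        rw [div_le_iff₀ hm0]
        have : (k:ℝ) ≤ m := by exact_mod_cast hkm
        nlinarith
      have := prodBound B hB.le (s.erase i) v habs j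
      rwa [hcard] at this
    simp only [hbasis, Polynomial.coeff_C_mul, norm_mul]
    set e := ‖P.eval (v i)‖ with he
    set p := ‖∏ k ∈ s.erase i, (v i - v k)⁻¹‖ with hp
    set q := ‖(∏ k ∈ s.erase i, (X - C (v k))).coeff j‖ with hq
    have hqB : q * B ^ j ≤ 2 ^ m * B ^ m := hnum
    have hEnd : A * ((m:ℝ)/B) ^ m * (2 ^ m * B ^ m) = A * (2 * (m:ℝ)) ^ m := by
      rw [div_pow, mul_pow]
      field_simp
    calc e * (p * q) * B ^ j = (e * p) * (q * B ^ j) := by ring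
      _ ≤ (A * ((m:ℝ)/B) ^ m) * (2 ^ m * B ^ m) := by
          apply mul_le_mul _ hqB (by positivity) (by positivity)
          exact mul_le_mul heval hden (norm_nonneg _) hA.le
      _ = A * (2 * (m:ℝ)) ^ m := hEnd
  -- assemble
  have H : ‖P.coeff j‖ * B ^ j ≤ (2 * (m:ℝ)) ^ (m+1) * A := by
    have hcoeff : P.coeff j = ∑ i ∈ s, (Polynomial.C (P.eval (v i)) * Lagrange.basis s v i).coeff j := by
      conv_lhs => rw [hPint]
      rw [Lagrange.interpolate_apply, Polynomial.finset_sum_coeff]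
    rw [hcoeff]
    calc ‖∑ i ∈ s, (Polynomial.C (P.eval (v i)) * Lagrange.basis s v i).coeff j‖ * B ^ j
        ≤ (∑ i ∈ s, ‖(Polynomial.C (P.eval (v i)) * Lagrange.basis s v i).coeff j‖) * B ^ j := by
          apply mul_le_mul_of_nonneg_right (norm_sum_le _ _) (by positivity)
      _ = ∑ i ∈ s, ‖(Polynomial.C (P.eval (v i)) * Lagrange.basis s v i).coeff j‖ * B ^ j := by
          rw [Finset.sum_mul]
      _ ≤ ∑ _i ∈ s, A * (2 * (m:ℝ)) ^ m := Finset.sum_le_sum key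
      _ = (m+1 : ℝ) * (A * (2 * m) ^ m) := by
          rw [Finset.sum_const, hs, Finset.card_range, nsmul_eq_mul]; push_cast; ring
      _ ≤ (2 * m) * (A * (2 * m) ^ m) := by
          have hm1 : (1:ℝ) ≤ m := by exact_mod_cast hm
          have h1 : (m:ℝ) + 1 ≤ 2 * m := by linarith
          apply mul_le_mul_of_nonneg_right h1 (by positivity)
      _ = (2 * (m:ℝ)) ^ (m+1) * A := by rw [pow_succ]; ring
  rw [zpow_neg, zpow_natCast, ← div_eq_mul_inv, le_div_iff₀ (by positivity)]
  exact H
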